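/- Define φ: F_8 × F_8 → F_2 by φ(x,y) = tr(y·x^6). Then the coboundary δφ(x,y,z) = φ(y,z) + φ(x+y,z) + φ(x,y+z) + φ(x,y) equals 1 if x, y, z are F_2-linearly independent in F_8 (viewed as a 3-dimensional F_2-vector space) and equals 0 otherwise. -/
import Mathlib

open scoped Classical
noncomputable section


abbrev F8 := GaloisField 2 3

def tr (x : F8) : F8 := x + x ^ 2 + x ^ 4

def φ (x y : F8) : F8 := tr (y * x ^ 6)

lemma h2 : (2 : F8) = 0 := CharTwo.two_eq_zero

lemma pow8 (a : F8) : a ^ 8 = a := by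
  haveI : Fintype F8 := Fintype.ofFinite _
  have hc : Fintype.card F8 = 8 := by
    have := GaloisField.card 2 3 (by norm_num)
    rwa [Nat.card_eq_fintype_card] at this
  have := FiniteField.pow_card a
  rwa [hc] at this

lemma tr_add (a b : F8) : tr (a + b) = tr a + tr b := by
  unfold tr
  linear_combination (a*b + 2*a^3*b + 3*a^2*b^2 + 2*a*b^3) * h2

lemma tr_zero : tr 0 = 0 := by simp [tr]

lemma tr_sq_self (a : F8) : tr a ^ 2 = tr a := by
  unfold tr
  linear_combination pow8 a + (a^3 + a^5 + a^6) * h2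

lemma tr_eq_zero_or_one (a : F8) : tr a = 0 ∨ tr a = 1 := by
  have h := tr_sq_self a
  have : tr a * (tr a - 1) = 0 := by linear_combination h
  rcases mul_eq_zero.1 this with h' | h'
  · exact Or.inl h'
  · exact Or.inr (sub_eq_zero.1 h')

lemma key1 (x y : F8) : tr (x * (x^4*y^2 + x^2*y^4)) = 0 := by
  unfold tr
  linear_combination (x^2*y^4 + y^8*(x^12 + x^5) + x^4*y^16) * pow8 x
    + (2*x^6 + x^5*y^8 + x^5*y) * pow8 y
    + (x^8*y^6 + 2*x^18*y^10 + 3*x^16*y^12 + 2*x^14*y^14 + x^5*y^2 + x^3*y^4 + x^6*y) * h2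

lemma key2 (x y : F8) : tr (y * (x^4*y^2 + x^2*y^4)) = 0 := by
  have := key1 y x
  rw [show y * (y^4*x^2 + y^2*x^4) = y * (x^4*y^2 + x^2*y^4) by ring] at this
  exact this

lemma exists_tr_ne : ∃ a : F8, tr a ≠ 0 := by
  by_contra hc
  push_neg at hc
  haveI : Fintype F8 := Fintype.ofFinite _
  set p : Polynomial F8 := Polynomial.X^4 + Polynomial.X^2 + Polynomial.X with hp
  have hpne : p ≠ 0 := by
    intro h0
    have h4 : p.coeff 4 = 1 := by
      simp [hp, Polynomial.coeff_X_pow, Polynomial.coeff_X]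
    rw [h0] at h4
    simp at h4
  have hdeg : p.natDegree = 4 := by
    rw [hp]; compute_degree!
  have hroot : ∀ a : F8, a ∈ p.roots := by
    intro a
    rw [Polynomial.mem_roots hpne]
    have := hc a
    unfold tr at this
    simp only [Polynomial.IsRoot, hp, Polynomial.eval_add, Polynomial.eval_pow,
      Polynomial.eval_X]
    linear_combination this
  have hsub : (Finset.univ : Finset F8) ⊆ p.roots.toFinset :=
    fun a _ => Multiset.mem_toFinset.2 (hroot a)
  have h1 : Fintype.card F8 ≤ p.roots.toFinset.card := Finset.card_le_card hsub
  have h2' : p.roots.toFinset.card ≤ Multiset.card p.roots := p.roots.toFinset_card_le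
  have h3 : Multiset.card p.roots ≤ p.natDegree := p.card_roots'
  have hc8 : Fintype.card F8 = 8 := by
    have := GaloisField.card 2 3 (by norm_num)
    rwa [Nat.card_eq_fintype_card] at this
  omega

lemma zmod2_cases : ∀ c : ZMod 2, c = 0 ∨ c = 1 := by decide

theorem coboundary_phi_eq_ind (x y z : F8) :
    φ y z + φ (x + y) z + φ x (y + z) + φ x y =
      if LinearIndependent (ZMod 2) ![x, y, z] then 1 else 0 := by
  have hL : φ y z + φ (x + y) z + φ x (y + z) + φ x y
      = tr (z * (x^4*y^2 + x^2*y^4)) := by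
    simp only [φ]
    rw [← tr_add, ← tr_add, ← tr_add]
    congr 1
    linear_combination (z*(y^6 + x^6 + 3*x^5*y + 7*x^4*y^2 + 10*x^3*y^3 + 7*x^2*y^4 + 3*x*y^5)
      + y*x^6) * h2
  rw [hL]
  set u : F8 := x^4*y^2 + x^2*y^4 with hu
  by_cases hli : LinearIndependent (ZMod 2) ![x, y, z]
  · rw [if_pos hli]
    -- independent case
    have hx0 : x ≠ 0 := by
      have := hli.ne_zero 0; simpa using this
    have hy0 : y ≠ 0 := by
      have := hli.ne_zero 1; simpa using this
    have hxy : x ≠ y := by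
      intro h
      have := hli.injective (by simp [h] : (![x, y, z] : Fin 3 → F8) 0 = ![x, y, z] 1)
      simp at this
    have hu0 : u ≠ 0 := by
      intro h0
      have hfac : x^2 * y^2 * (x + y)^2 = 0 := by
        rw [← h0, hu]; linear_combination (x^3*y^3) * h2
      rcases mul_eq_zero.1 hfac with h' | h'
      · rcases mul_eq_zero.1 h' with h'' | h''
        · exact hx0 (pow_eq_zero_iff (by norm_num) |>.1 h'')
        · exact hy0 (pow_eq_zero_iff (by norm_num) |>.1 h'')
      · have hxy0 : x + y = 0 := pow_eq_zero_iff (by norm_num) |>.1 h'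
        exact hxy (by linear_combination hxy0 - y * h2)
    rcases tr_eq_zero_or_one (z * u) with h0 | h1
    · exfalso
      -- define the kernel submodule
      let K : Submodule (ZMod 2) F8 :=
        { carrier := {v | tr (v * u) = 0}
          add_mem' := by
            intro a b ha hb
            simp only [Set.mem_setOf_eq] at *
            rw [add_mul, tr_add, ha, hb, add_zero]
          zero_mem' := by simp only [Set.mem_setOf_eq, zero_mul, tr_zero]
          smul_mem' := by
            intro c v hv
            simp only [Set.mem_setOf_eq] at *
            rcases zmod2_cases c with rfl | rfl
            · simp only [zero_smul, zero_mul, tr_zero]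
            · simpa using hv }
      have hxK : x ∈ K := key1 x y
      have hyK : y ∈ K := key2 x y
      have hzK : z ∈ K := h0
      have hspan : Submodule.span (ZMod 2) (Set.range ![x, y, z]) = ⊤ := by
        apply hli.span_eq_top_of_card_eq_finrank
        rw [GaloisField.finrank 2 (by norm_num)]
        simp
      have hKtop : K = ⊤ := by
        rw [← top_le_iff, ← hspan]
        rw [Submodule.span_le]
        intro v hv
        obtain ⟨j, rfl⟩ := hv
        fin_cases j
        · simpa using hxK
        · simpa using hyK
        · simpa using hzK
      obtain ⟨a, ha⟩ := exists_tr_ne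
      have : a * u⁻¹ ∈ K := hKtop ▸ Submodule.mem_top
      have hK' : tr (a * u⁻¹ * u) = 0 := this
      rw [mul_assoc, inv_mul_cancel₀ hu0, mul_one] at hK'
      exact ha hK'
    · exact h1
  · rw [if_neg hli]
    rw [Fintype.not_linearIndependent_iff] at hli
    obtain ⟨g, hsum, i, hgi⟩ := hli
    rw [Fin.sum_univ_three] at hsum
    simp only [Matrix.cons_val_zero, Matrix.cons_val_one, Matrix.head_cons,
      Matrix.cons_val_two, Matrix.tail_cons] at hsum
    have hu_x0 : x = 0 → tr (z * u) = 0 := by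
      intro h; rw [hu, h]; rw [show z * ((0:F8)^4*y^2 + (0:F8)^2*y^4) = 0 by ring]; exact tr_zero
    have hu_y0 : y = 0 → tr (z * u) = 0 := by
      intro h; rw [hu, h]; rw [show z * (x^4*(0:F8)^2 + x^2*(0:F8)^4) = 0 by ring]; exact tr_zero
    have hu_xy : x + y = 0 → tr (z * u) = 0 := by
      intro h
      have hyx : y = x := by linear_combination h - x * h2
      rw [hu, hyx]
      rw [show z * (x^4*x^2 + x^2*x^4) = z * x ^ 6 * 2 by ring, h2, mul_zero]
      exact tr_zero
    have hz_x : z = x → tr (z * u) = 0 := fun h => by rw [h, hu]; exact key1 x y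
    have hz_y : z = y → tr (z * u) = 0 := fun h => by rw [h, hu]; exact key2 x y
    have hz_xy : z = x + y → tr (z * u) = 0 := by
      intro h
      rw [h, hu, add_mul, tr_add]
      rw [key1 x y, key2 x y, add_zero]
    have hz_0 : z = 0 → tr (z * u) = 0 := by
      intro h; rw [h, zero_mul]; exact tr_zero
    rcases zmod2_cases (g 0) with hg0 | hg0 <;>
      rcases zmod2_cases (g 1) with hg1 | hg1 <;>
        rcases zmod2_cases (g 2) with hg2 | hg2 <;>
          rw [hg0, hg1, hg2] at hsum <;>
          simp only [zero_smul, one_smul, add_zero, zero_add] at hsum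
    · exfalso
      fin_cases i <;> simp_all
    · exact hz_0 hsum
    · exact hu_y0 hsum
    · exact hz_y (by linear_combination hsum - y * h2)
    · exact hu_x0 hsum
    · exact hz_x (by linear_combination hsum - x * h2)
    · exact hu_xy hsum
    · exact hz_xy (by linear_combination hsum - (x+y) * h2)
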